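/- Let f : ℝ → ℝ be 2π-periodic with continuous derivative f_x satisfying ‖f_x‖₂ < ∞, let K_p ∈ ℝ, and let e : ℝ × [0,∞) → ℝ be continuously differentiable and 2π-periodic in x, satisfying e_t(x,t) + ∂_x( e(x,t) · (−V^e(x,t)) ) = −K_p e(x,t) with V^e(·,t) = f * e(·,t). Then for every t ≥ 0, d/dt ‖e(·,t)‖₂² ≤ ( −2K_p + ‖f_x‖₂ ‖e(·,t)‖₂ ) · ‖e(·,t)‖₂². -/

import Mathlib

open Real MeasureTheory Filter

/-- Circular convolution of two (2π-periodic) functions on the unit circle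
`S = [-π, π]`: `(g * h)(x) = ∫_{-π}^{π} g (x - y) h y dy`. -/
noncomputable def circConv (g h : ℝ → ℝ) (x : ℝ) : ℝ :=
  ∫ y in (-Real.pi)..Real.pi, g (x - y) * h y

/-- If `e` satisfies `e_t + ∂_x(e · (−V^e)) = −K_p e` with
`V^e = f * e`, then for every `t ≥ 0`,
`d/dt ‖e(·,t)‖₂² ≤ (−2K_p + ‖f_x‖₂ ‖e(·,t)‖₂) ‖e(·,t)‖₂²`. -/
lemma cs_aux {a b : ℝ} (hab : a ≤ b) {g h : ℝ → ℝ}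
    (hg : ContinuousOn g (Set.Icc a b)) (hh : ContinuousOn h (Set.Icc a b)) :
    (∫ x in a..b, g x * h x) ≤
      Real.sqrt (∫ x in a..b, g x ^ 2) * Real.sqrt (∫ x in a..b, h x ^ 2) := by
  have huIcc : Set.uIcc a b = Set.Icc a b := Set.uIcc_of_le hab
  have hig : IntervalIntegrable (fun x => g x ^ 2) volume a b :=
    ((hg.pow 2).mono (by rw [huIcc])).intervalIntegrable
  have hih : IntervalIntegrable (fun x => h x ^ 2) volume a b :=
    ((hh.pow 2).mono (by rw [huIcc])).intervalIntegrable
  have high : IntervalIntegrable (fun x => g x * h x) volume a b :=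
    ((hg.mul hh).mono (by rw [huIcc])).intervalIntegrable
  set A := ∫ x in a..b, g x ^ 2 with hA
  set B := ∫ x in a..b, g x * h x with hB
  set C := ∫ x in a..b, h x ^ 2 with hC
  have hAnn : 0 ≤ A := intervalIntegral.integral_nonneg hab (fun x _ => sq_nonneg _)
  have hCnn : 0 ≤ C := intervalIntegral.integral_nonneg hab (fun x _ => sq_nonneg _)
  have key : ∀ lam : ℝ, 0 ≤ A * lam ^ 2 + 2 * B * lam + C := by
    intro lam
    have : (0:ℝ) ≤ ∫ x in a..b, (lam * g x + h x) ^ 2 :=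
      intervalIntegral.integral_nonneg hab (fun x _ => sq_nonneg _)
    calc (0:ℝ) ≤ ∫ x in a..b, (lam * g x + h x) ^ 2 := this
      _ = ∫ x in a..b, (lam ^ 2 * g x ^ 2 + 2 * lam * (g x * h x) + h x ^ 2) := by
          apply intervalIntegral.integral_congr; intro x _; ring
      _ = lam ^ 2 * A + 2 * lam * B + C := by
          rw [intervalIntegral.integral_add ((hig.const_mul _).add (high.const_mul _)) hih,
            intervalIntegral.integral_add (hig.const_mul _) (high.const_mul _),
            intervalIntegral.integral_const_mul, intervalIntegral.integral_const_mul]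
      _ = A * lam ^ 2 + 2 * B * lam + C := by ring
  have hdisc : discrim A (2 * B) C ≤ 0 := by
    apply discrim_le_zero
    intro x
    nlinarith [key x]
  have hB2 : B ^ 2 ≤ A * C := by
    rw [discrim] at hdisc; nlinarith
  calc B ≤ |B| := le_abs_self B
    _ = Real.sqrt (B ^ 2) := (Real.sqrt_sq_eq_abs B).symm
    _ ≤ Real.sqrt (A * C) := Real.sqrt_le_sqrt hB2
    _ = Real.sqrt A * Real.sqrt C := Real.sqrt_mul hAnn C

theorem stmt7 (f f' : ℝ → ℝ) (Kp : ℝ) (e : ℝ → ℝ → ℝ)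
    (hf_per : Function.Periodic f (2 * π))
    (hf' : ∀ x, HasDerivAt f (f' x) x)
    (hf'_cont : Continuous f')
    (he_smooth : ContDiff ℝ 1 fun p : ℝ × ℝ => e p.1 p.2)
    (he_per : ∀ x t : ℝ, e (x + 2 * π) t = e x t)
    (hpde : ∀ x t : ℝ, 0 ≤ t →
      deriv (fun s => e x s) t
          + deriv (fun z => e z t * (-(circConv f (fun y => e y t) z))) x
        = -Kp * e x t) :
    ∀ t : ℝ, 0 ≤ t → ∃ d : ℝ,
      HasDerivAt (fun s => ∫ x in (-π)..π, (e x s) ^ 2) d t ∧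
      d ≤ (-(2 * Kp)
            + Real.sqrt (∫ x in (-π)..π, (f' x) ^ 2)
                * Real.sqrt (∫ x in (-π)..π, (e x t) ^ 2))
          * (∫ x in (-π)..π, (e x t) ^ 2) := by
  intro t ht
  have hpi : (-π : ℝ) ≤ π := by linarith [Real.pi_pos]
  have hfc : Continuous f := by
    rw [continuous_iff_continuousAt]; intro x; exact (hf' x).continuousAt
  set F : ℝ × ℝ → ℝ := fun p => e p.1 p.2 with hFdef
  have hFdiff : Differentiable ℝ F := he_smooth.differentiable one_ne_zero
  have hFc : Continuous F := he_smooth.continuous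
  set Ex : ℝ → ℝ → ℝ := fun x s => fderiv ℝ F (x, s) (1, 0) with hExdef
  set Et : ℝ → ℝ → ℝ := fun x s => fderiv ℝ F (x, s) (0, 1) with hEtdef
  have hEx : ∀ x s, HasDerivAt (fun z => e z s) (Ex x s) x := by
    intro x s
    have h1 : HasDerivAt (fun z : ℝ => (z, s)) ((1:ℝ), (0:ℝ)) x :=
      (hasDerivAt_id x).prodMk (hasDerivAt_const x s)
    exact (hFdiff (x, s)).hasFDerivAt.comp_hasDerivAt x h1
  have hEt : ∀ x s, HasDerivAt (fun u => e x u) (Et x s) s := by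
    intro x s
    have h1 : HasDerivAt (fun u : ℝ => (x, u)) ((0:ℝ), (1:ℝ)) s :=
      (hasDerivAt_const s x).prodMk (hasDerivAt_id s)
    exact (hFdiff (x, s)).hasFDerivAt.comp_hasDerivAt s h1
  have hExc : Continuous fun p : ℝ × ℝ => Ex p.1 p.2 := by
    exact (he_smooth.continuous_fderiv one_ne_zero).clm_apply continuous_const
  have hEtc : Continuous fun p : ℝ × ℝ => Et p.1 p.2 := by
    exact (he_smooth.continuous_fderiv one_ne_zero).clm_apply continuous_const
  set V : ℝ → ℝ → ℝ := fun x s => ∫ y in (-π)..π, f (x - y) * e y s with hVdef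
  set Vx : ℝ → ℝ → ℝ := fun x s => ∫ y in (-π)..π, f' (x - y) * e y s with hVxdef
  -- continuity of V and Vx in x
  have hVc : ∀ s, Continuous fun x => V x s := by
    intro s
    apply intervalIntegral.continuous_parametric_intervalIntegral_of_continuous'
    exact (hfc.comp (continuous_fst.sub continuous_snd)).mul
      (hFc.comp (continuous_snd.prodMk continuous_const))
  have hVxc : ∀ s, Continuous fun x => Vx x s := by
    intro s
    apply intervalIntegral.continuous_parametric_intervalIntegral_of_continuous'
    exact (hf'_cont.comp (continuous_fst.sub continuous_snd)).mul
      (hFc.comp (continuous_snd.prodMk continuous_const))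
  have he_cont : ∀ s : ℝ, Continuous fun y : ℝ => e y s := fun s =>
    hFc.comp (continuous_id.prodMk continuous_const)
  -- derivative of V in x
  have hVx_deriv : ∀ s x₀, HasDerivAt (fun x => V x s) (Vx x₀ s) x₀ := by
    intro s x₀
    have hK : IsCompact (Set.Icc (x₀ - 1 - π) (x₀ + 1 + π)) := isCompact_Icc
    obtain ⟨C1, hC1⟩ := hK.exists_bound_of_continuousOn hf'_cont.continuousOn
    have hK2 : IsCompact (Set.Icc (-π) π) := isCompact_Icc
    obtain ⟨C2, hC2⟩ := hK2.exists_bound_of_continuousOn (he_cont s).continuousOn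
    refine (intervalIntegral.hasDerivAt_integral_of_dominated_loc_of_deriv_le
      (F := fun x y => f (x - y) * e y s) (F' := fun x y => f' (x - y) * e y s)
      (bound := fun _ => |C1| * |C2|) (a := -π) (b := π) (x₀ := x₀) (μ := volume)
      (Metric.ball_mem_nhds _ one_pos) ?_ ?_ ?_ ?_ ?_ ?_).2
    · exact Filter.Eventually.of_forall fun x =>
        ((hfc.comp (continuous_const.sub continuous_id)).mul (he_cont s)).aestronglyMeasurable
    · exact ((hfc.comp (continuous_const.sub continuous_id)).mul
        (he_cont s)).intervalIntegrable _ _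
    · exact ((hf'_cont.comp (continuous_const.sub continuous_id)).mul
        (he_cont s)).aestronglyMeasurable
    · apply Filter.Eventually.of_forall
      intro y hy x hx
      have hy' : y ∈ Set.Icc (-π) π := Set.mem_Icc_of_Ioc (by rwa [Set.uIoc_of_le hpi] at hy)
      have hx' : |x - x₀| < 1 := by simpa [Real.dist_eq] using Metric.mem_ball.mp hx
      have hxlo := (abs_lt.mp hx').1
      have hxhi := (abs_lt.mp hx').2
      have hmem : x - y ∈ Set.Icc (x₀ - 1 - π) (x₀ + 1 + π) :=
        ⟨by linarith [hy'.2], by linarith [hy'.1]⟩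
      have h1 := hC1 _ hmem
      have h2 := hC2 y hy'
      have hn : ‖f' (x - y) * e y s‖ = ‖f' (x - y)‖ * ‖e y s‖ := norm_mul _ _
      rw [hn]
      have := abs_nonneg (f' (x - y))
      calc ‖f' (x - y)‖ * ‖e y s‖ ≤ C1 * C2 := by
            apply mul_le_mul h1 h2 (norm_nonneg _) (le_trans (norm_nonneg _) h1)
        _ ≤ |C1| * |C2| := mul_le_mul (le_abs_self _) (le_abs_self _)
            (le_trans (norm_nonneg _) h2) (abs_nonneg _)
    · exact intervalIntegrable_const
    · apply Filter.Eventually.of_forall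
      intro y _ x _
      have h1 : HasDerivAt (fun x : ℝ => x - y) 1 x := (hasDerivAt_id x).sub_const y
      have h2 : HasDerivAt (fun x : ℝ => f (x - y)) (f' (x - y)) x := by
        simpa [Function.comp_def] using (hf' (x - y)).comp x h1
      exact h2.mul_const (e y s)
  -- periodicity
  have hVper : ∀ x s, V (x + 2 * π) s = V x s := by
    intro x s
    apply intervalIntegral.integral_congr
    intro y _
    simp only
    rw [show x + 2 * π - y = (x - y) + 2 * π by ring, hf_per (x - y)]
  have hf'per : ∀ u, f' (u + 2 * π) = f' u := by
    intro u
    have h1 : HasDerivAt (fun z : ℝ => z + 2 * π) 1 u := (hasDerivAt_id u).add_const _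
    have h2 : HasDerivAt (fun z : ℝ => f (z + 2 * π)) (f' (u + 2 * π)) u := by
      simpa [Function.comp_def] using (hf' (u + 2 * π)).comp u h1
    have h3 : (fun z : ℝ => f (z + 2 * π)) = f := funext hf_per
    rw [h3] at h2
    exact h2.unique (hf' u)
  have heq_pi : e π t = e (-π) t := by
    have := he_per (-π) t; rw [show -π + 2 * π = π by ring] at this; exact this
  have hVeq_pi : V π t = V (-π) t := by
    have := hVper (-π) t; rw [show -π + 2 * π = π by ring] at this; exact this
  -- rewrite the PDE
  have hPDE : ∀ x, Et x t = -Kp * e x t + (Ex x t * V x t + e x t * Vx x t) := by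
    intro x
    have hD : HasDerivAt (fun z => e z t * (-(circConv f (fun y => e y t) z)))
        (-(Ex x t * V x t + e x t * Vx x t)) x := by
      have h1 : HasDerivAt (fun z => V z t) (Vx x t) x := hVx_deriv t x
      have h2 := (hEx x t).fun_mul h1.fun_neg
      refine h2.congr_deriv ?_
      ring
    have h0 := hpde x t ht
    rw [(hEt x t).deriv, hD.deriv] at h0
    linarith
  -- derivative of the energy
  have hN : HasDerivAt (fun s => ∫ x in (-π)..π, e x s ^ 2)
      (∫ x in (-π)..π, 2 * e x t * Et x t) t := by
    have hK : IsCompact ((Set.Icc (-π) π) ×ˢ (Set.Icc (t - 1) (t + 1))) :=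
      isCompact_Icc.prod isCompact_Icc
    have hgc : Continuous fun p : ℝ × ℝ => 2 * e p.1 p.2 * Et p.1 p.2 :=
      (continuous_const.mul hFc).mul hEtc
    obtain ⟨C, hC⟩ := hK.exists_bound_of_continuousOn hgc.continuousOn
    refine (intervalIntegral.hasDerivAt_integral_of_dominated_loc_of_deriv_le
      (F := fun s x => e x s ^ 2) (F' := fun s x => 2 * e x s * Et x s)
      (bound := fun _ => C) (a := -π) (b := π) (x₀ := t) (μ := volume)
      (Metric.ball_mem_nhds _ one_pos) ?_ ?_ ?_ ?_ ?_ ?_).2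
    · exact Filter.Eventually.of_forall fun s =>
        ((he_cont s).pow 2).aestronglyMeasurable
    · exact ((he_cont t).pow 2).intervalIntegrable _ _
    · exact ((continuous_const.mul (he_cont t)).mul
        (hEtc.comp (continuous_id.prodMk continuous_const))).aestronglyMeasurable
    · apply Filter.Eventually.of_forall
      intro x hx s hs
      have hx' : x ∈ Set.Icc (-π) π := Set.mem_Icc_of_Ioc (by rwa [Set.uIoc_of_le hpi] at hx)
      have hs' : s ∈ Set.Icc (t - 1) (t + 1) := by
        have : |s - t| < 1 := by simpa [Real.dist_eq] using Metric.mem_ball.mp hs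
        have h1 := (abs_lt.mp this).1
        have h2 := (abs_lt.mp this).2
        exact ⟨by linarith, by linarith⟩
      exact hC (x, s) ⟨hx', hs'⟩
    · exact intervalIntegrable_const
    · apply Filter.Eventually.of_forall
      intro x _ s _
      have h := (hEt x s).fun_pow 2
      refine h.congr_deriv ?_
      push_cast
      ring
  -- integration by parts identity
  have hibp : (∫ x in (-π)..π, Ex x t * (e x t * V x t)
      + e x t * (Ex x t * V x t + e x t * Vx x t)) = 0 := by
    have hExct : Continuous fun x => Ex x t := hExc.comp (continuous_id.prodMk continuous_const)
    have h := intervalIntegral.integral_deriv_mul_eq_sub (a := -π) (b := π)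
      (u := fun x => e x t) (v := fun x => e x t * V x t)
      (u' := fun x => Ex x t) (v' := fun x => Ex x t * V x t + e x t * Vx x t)
      (fun x _ => hEx x t) (fun x _ => (hEx x t).mul (hVx_deriv t x))
      (hExct.intervalIntegrable _ _)
      (((hExct.mul (hVc t)).add ((he_cont t).mul (hVxc t))).intervalIntegrable _ _)
    rw [h]
    rw [heq_pi, hVeq_pi]
    ring
  -- notation
  set N := ∫ x in (-π)..π, e x t ^ 2 with hNdef
  set M := Real.sqrt (∫ x in (-π)..π, f' x ^ 2) * Real.sqrt N with hMdef
  have hExct : Continuous fun x => Ex x t := hExc.comp (continuous_id.prodMk continuous_const)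
  have hGc : Continuous fun x => Ex x t * (e x t * V x t)
      + e x t * (Ex x t * V x t + e x t * Vx x t) :=
    (hExct.mul ((he_cont t).mul (hVc t))).add
      ((he_cont t).mul ((hExct.mul (hVc t)).add ((he_cont t).mul (hVxc t))))
  have hG_int : IntervalIntegrable (fun x => Ex x t * (e x t * V x t)
      + e x t * (Ex x t * V x t + e x t * Vx x t)) volume (-π) π :=
    hGc.intervalIntegrable _ _
  have hVx2_int : IntervalIntegrable (fun x => e x t ^ 2 * Vx x t) volume (-π) π :=
    (((he_cont t).pow 2).mul (hVxc t)).intervalIntegrable _ _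
  have hconst_int : IntervalIntegrable (fun x => (-(2 * Kp)) * e x t ^ 2) volume (-π) π :=
    (continuous_const.mul ((he_cont t).pow 2)).intervalIntegrable _ _
  have he2_int : IntervalIntegrable (fun x => e x t ^ 2) volume (-π) π :=
    ((he_cont t).pow 2).intervalIntegrable _ _
  -- split the derivative integral
  have hsum : (∫ x in (-π)..π, 2 * e x t * Et x t) = -(2 * Kp) * N
      + ∫ x in (-π)..π, e x t ^ 2 * Vx x t := by
    have hstep : (∫ x in (-π)..π, 2 * e x t * Et x t)
        = (∫ x in (-π)..π, (-(2 * Kp)) * e x t ^ 2)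
          + ((∫ x in (-π)..π, Ex x t * (e x t * V x t)
              + e x t * (Ex x t * V x t + e x t * Vx x t))
            + ∫ x in (-π)..π, e x t ^ 2 * Vx x t) := by
      rw [← intervalIntegral.integral_add hG_int hVx2_int,
        ← intervalIntegral.integral_add hconst_int (hG_int.add hVx2_int)]
      apply intervalIntegral.integral_congr
      intro x _
      simp only
      rw [hPDE x]
      ring
    rw [hstep, hibp, intervalIntegral.integral_const_mul]
    ring
  -- pointwise bound on Vx via Cauchy-Schwarz
  have hMbound : ∀ x, Vx x t ≤ M := by
    intro x
    have hg : ContinuousOn (fun y => f' (x - y)) (Set.Icc (-π) π) :=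
      (hf'_cont.comp (continuous_const.sub continuous_id)).continuousOn
    have hh : ContinuousOn (fun y => e y t) (Set.Icc (-π) π) := (he_cont t).continuousOn
    have hcs := cs_aux hpi hg hh
    have hsub : (∫ y in (-π)..π, f' (x - y) ^ 2) = ∫ u in (-π)..π, f' u ^ 2 := by
      have h1 := intervalIntegral.integral_comp_sub_left (a := -π) (b := π)
        (fun u => f' u ^ 2) x
      rw [h1]
      have hper2 : Function.Periodic (fun u => f' u ^ 2) (2 * π) := by
        intro u; simp only; rw [hf'per u]
      have h2 := hper2.intervalIntegral_add_eq (x - π) (-π)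
      rw [show x - π + 2 * π = x + π by ring, show -π + 2 * π = π by ring] at h2
      rw [show x - -π = x + π by ring]
      exact h2
    rw [hsub] at hcs
    exact hcs
  have hfinal : (∫ x in (-π)..π, e x t ^ 2 * Vx x t) ≤ M * N := by
    have hmono : (∫ x in (-π)..π, e x t ^ 2 * Vx x t) ≤ ∫ x in (-π)..π, e x t ^ 2 * M := by
      apply intervalIntegral.integral_mono_on hpi hVx2_int
        (he2_int.mul_const _)
      intro x _
      exact mul_le_mul_of_nonneg_left (hMbound x) (sq_nonneg _)
    calc (∫ x in (-π)..π, e x t ^ 2 * Vx x t) ≤ ∫ x in (-π)..π, e x t ^ 2 * M := hmono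
      _ = N * M := intervalIntegral.integral_mul_const M _
      _ = M * N := mul_comm _ _
  refine ⟨∫ x in (-π)..π, 2 * e x t * Et x t, hN, ?_⟩
  rw [hsum]
  have hexp : (-(2 * Kp) + M) * N = -(2 * Kp) * N + M * N := by ring
  linarith [hfinal, hexp]
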